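/- Let u_p (p = 1,…,n) be the polynomials x^{p-1}y^{n-p} (where z = x+iy), viewed as elements of the space of homogeneous degree n-1 polynomials in z, z̄, and let π_p denote orthogonal projection onto the line spanned by u_p. With E⁰_k = (z ∂/∂z̄)^k, one has Tr(E⁰_k · π_1) = (-1)^k (n-1)! / (2^k (n-k-1)!). -/

import Mathlib

/-- The matrix of `-√2·X = z ∂/∂z̄` in the basis `w_p = z^{p-1} z̄^{n-p}` (`p = 1,…,n`,
here indexed by `Fin n` with `p = i+1`): `w_p ↦ (n-p)·w_{p+1}`. -/
def Emat (n : ℕ) : Matrix (Fin n) (Fin n) ℂ :=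
  fun i j => if (i : ℕ) = (j : ℕ) + 1 then ((n - 1 - (j : ℕ) : ℕ) : ℂ) else 0

/-- The matrix of `√2·Y = z̄ ∂/∂z` in the same basis: `w_p ↦ (p-1)·w_{p-1}`. -/
def Fmat (n : ℕ) : Matrix (Fin n) (Fin n) ℂ :=
  fun i j => if (i : ℕ) + 1 = (j : ℕ) then ((j : ℕ) : ℂ) else 0

/-- `E⁰_k = (-√2 X)^k`. -/
def E0 (n k : ℕ) : Matrix (Fin n) (Fin n) ℂ := (Emat n) ^ k

/-- `F⁰_k = -(√2 Y)^k`. -/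
def F0 (n k : ℕ) : Matrix (Fin n) (Fin n) ℂ := -((Fmat n) ^ k)

/-- The coordinates (in the basis `w_{r+s+1} = z^{r+s} z̄^{n-1-(r+s)}`) of the real
polynomial `u_p = x^{p-1} y^{n-p}` (with `z = x+iy`), `p = 1,…,n`, indexed by `Fin n`
with `p = (p:ℕ)+1`:
`u_p = i^{n-p}/2^{n-1} ∑_{r=0}^{p-1} ∑_{s=0}^{n-p} (-1)^s C(p-1,r) C(n-p,s) w_{r+s+1}`. -/
noncomputable def uvec (n : ℕ) (p : Fin n) : Fin n → ℂ := fun j =>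
  Complex.I ^ (n - 1 - (p : ℕ)) / 2 ^ (n - 1) *
    ∑ r ∈ Finset.range ((p : ℕ) + 1), ∑ s ∈ Finset.range (n - (p : ℕ)),
      if r + s = (j : ℕ) then
        ((-1 : ℂ)) ^ s * (((p : ℕ).choose r : ℕ) : ℂ) * (((n - 1 - (p : ℕ)).choose s : ℕ) : ℂ)
      else 0


open Finset

noncomputable def Umat (n : ℕ) : Matrix (Fin n) (Fin n) ℂ := Matrix.of fun j p => uvec n p j

lemma Umat_eval (n : ℕ) (t : ℂ) (p : Fin n) :
    ∑ j : Fin n, t ^ (j : ℕ) * Umat n j p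
      = Complex.I ^ (n - 1 - (p : ℕ)) / 2 ^ (n - 1) *
        ((t + 1) ^ (p : ℕ) * (-t + 1) ^ (n - 1 - (p : ℕ))) := by
  have hq : n - (p : ℕ) = (n - 1 - (p : ℕ)) + 1 := by omega
  simp only [Umat, Matrix.of_apply, uvec]
  rw [show ∀ (c : ℂ) (S : Fin n → ℂ), (∑ j : Fin n, t ^ (j:ℕ) * (c * S j)) = c * ∑ j : Fin n, t ^ (j:ℕ) * S j from
    fun c S => by rw [mul_sum]; exact Finset.sum_congr rfl fun j _ => by ring]
  congr 1
  rw [Fin.sum_univ_eq_sum_range (fun j => t ^ j * ∑ r ∈ range ((p : ℕ) + 1), ∑ s ∈ range (n - (p : ℕ)),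
      if r + s = j then ((-1 : ℂ)) ^ s * (((p : ℕ).choose r : ℕ) : ℂ) * (((n - 1 - (p : ℕ)).choose s : ℕ) : ℂ) else 0)]
  have hl : ∑ j ∈ range n, (t ^ j * ∑ r ∈ range ((p : ℕ) + 1), ∑ s ∈ range (n - (p : ℕ)),
      if r + s = j then ((-1 : ℂ)) ^ s * (((p : ℕ).choose r : ℕ) : ℂ) * (((n - 1 - (p : ℕ)).choose s : ℕ) : ℂ) else 0)
      = ∑ r ∈ range ((p : ℕ) + 1), ∑ s ∈ range (n - (p : ℕ)),
          t ^ (r + s) * (((-1 : ℂ)) ^ s * (((p : ℕ).choose r : ℕ) : ℂ) * (((n - 1 - (p : ℕ)).choose s : ℕ) : ℂ)) := by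
    simp only [Finset.mul_sum, mul_ite, mul_zero]
    rw [Finset.sum_comm]
    refine Finset.sum_congr rfl fun r hr => ?_
    rw [Finset.sum_comm]
    refine Finset.sum_congr rfl fun s hs => ?_
    rw [Finset.sum_ite_eq (range n) (r + s) (fun j => t ^ j * _), if_pos]
    rw [Finset.mem_range] at hr hs ⊢
    omega
  rw [hl, add_pow, add_pow, hq, Finset.sum_mul_sum]
  refine Finset.sum_congr rfl fun r hr => Finset.sum_congr rfl fun s hs => ?_
  rw [one_pow, one_pow, mul_one, mul_one, pow_add, neg_pow]
  ring

noncomputable def phiv (n : ℕ) : Fin n → ℂ := fun j => (-Complex.I) ^ (n - 1) * (-1 : ℂ) ^ (j : ℕ)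

lemma phi_col (n : ℕ) (p : Fin n) :
    ∑ j : Fin n, phiv n j * Umat n j p = if (p : ℕ) = 0 then 1 else 0 := by
  have h := Umat_eval n (-1) p
  have h2 : ∑ j : Fin n, phiv n j * Umat n j p
      = (-Complex.I) ^ (n - 1) * ∑ j : Fin n, (-1 : ℂ) ^ (j : ℕ) * Umat n j p := by
    rw [mul_sum]; exact Finset.sum_congr rfl fun j _ => by simp [phiv]; ring
  rw [h2, h]
  rcases Nat.eq_zero_or_pos (p : ℕ) with hp | hp
  · rw [if_pos hp, hp]
    have : ((-1 : ℂ) + 1) ^ (0:ℕ) * (- (-1:ℂ) + 1) ^ (n - 1 - 0) = 2 ^ (n - 1) := by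
      norm_num
    rw [this]
    have h2ne : (2 : ℂ) ^ (n - 1) ≠ 0 := by
      exact pow_ne_zero _ two_ne_zero
    field_simp
    rw [Nat.sub_zero, ← mul_pow]
    norm_num
  · rw [if_neg (by omega)]
    have : ((-1 : ℂ) + 1) ^ (p : ℕ) = 0 := by
      rw [neg_add_cancel, zero_pow (by omega)]
    rw [this]; ring

lemma Umat_det_ne_zero (n : ℕ) : (Umat n).det ≠ 0 := by
  set t : Fin n → ℂ := fun i => (((i : ℕ) : ℂ) - 1) / (((i : ℕ) : ℂ) + 1) with ht
  have h1 : ∀ i : Fin n, (((i : ℕ) : ℂ)) + 1 ≠ 0 := fun i => Nat.cast_add_one_ne_zero _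
  set d : Fin n → ℂ := fun i => (2 / (((i : ℕ) : ℂ) + 1)) ^ (n - 1) with hd
  set c : Fin n → ℂ := fun p => Complex.I ^ (n - 1 - (p : ℕ)) / 2 ^ (n - 1) with hc
  have key : Matrix.vandermonde t * Umat n
      = Matrix.diagonal d * Matrix.vandermonde (fun i : Fin n => ((i : ℕ) : ℂ)) * Matrix.diagonal c := by
    ext i p
    have hmul : (Matrix.vandermonde t * Umat n) i p = ∑ j : Fin n, (t i) ^ (j : ℕ) * Umat n j p := by
      simp [Matrix.mul_apply, Matrix.vandermonde]
    rw [hmul, Umat_eval n (t i) p]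
    have hx := h1 i
    have e1 : t i + 1 = 2 * ((i : ℕ) : ℂ) / (((i : ℕ) : ℂ) + 1) := by
      rw [eq_div_iff hx, add_mul, ht]
      simp only []
      rw [div_mul_cancel₀ _ hx]
      ring
    have e2 : -(t i) + 1 = 2 / (((i : ℕ) : ℂ) + 1) := by
      rw [eq_div_iff hx, add_mul, ht]
      simp only []
      rw [neg_mul, div_mul_cancel₀ _ hx]
      ring
    rw [e1, e2]
    have hrhs : (Matrix.diagonal d * Matrix.vandermonde (fun i : Fin n => ((i : ℕ) : ℂ)) * Matrix.diagonal c) i p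
        = d i * ((i : ℕ) : ℂ) ^ (p : ℕ) * c p := by
      simp [Matrix.diagonal_mul, Matrix.mul_diagonal, Matrix.vandermonde]
    rw [hrhs, hd, hc]
    simp only []
    set q := n - 1 - (p : ℕ) with hqdef
    rw [show n - 1 = q + (p : ℕ) from by omega, pow_add, pow_add]
    field_simp
    ring
  have hdv : Matrix.det (Matrix.vandermonde (fun i : Fin n => ((i : ℕ) : ℂ))) ≠ 0 := by
    rw [Matrix.det_vandermonde_ne_zero_iff]
    intro a b hab
    have : (a : ℕ) = (b : ℕ) := Nat.cast_injective hab
    exact Fin.ext this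
  have hdd : (Matrix.diagonal d).det ≠ 0 := by
    rw [Matrix.det_diagonal]
    exact Finset.prod_ne_zero_iff.mpr fun i _ => pow_ne_zero _ (div_ne_zero two_ne_zero (h1 i))
  have hdc : (Matrix.diagonal c).det ≠ 0 := by
    rw [Matrix.det_diagonal]
    exact Finset.prod_ne_zero_iff.mpr fun p _ =>
      div_ne_zero (pow_ne_zero _ Complex.I_ne_zero) (pow_ne_zero _ two_ne_zero)
  have := congrArg Matrix.det key
  rw [Matrix.det_mul, Matrix.det_mul, Matrix.det_mul] at this
  intro h
  rw [h, mul_zero] at this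
  exact (mul_ne_zero (mul_ne_zero hdd hdv) hdc) this.symm

lemma fin_sum_collapse {n : ℕ} (c : ℕ) (f : Fin n → ℂ) :
    (∑ l : Fin n, if (l : ℕ) = c then f l else 0)
      = if h : c < n then f ⟨c, h⟩ else 0 := by
  split_ifs with h
  · rw [Finset.sum_eq_single (⟨c, h⟩ : Fin n)]
    · simp
    · intro b _ hb
      rw [if_neg]
      exact fun hc => hb (Fin.ext hc)
    · simp
  · apply Finset.sum_eq_zero
    intro l _
    rw [if_neg]
    exact fun hc => h (hc ▸ l.isLt)

lemma Emat_pow (n k : ℕ) : ∀ i j : Fin n,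
    ((Emat n) ^ k) i j = if (i : ℕ) = (j : ℕ) + k then
      (∏ m ∈ Finset.range k, ((n - 1 - ((j : ℕ) + m) : ℕ) : ℂ)) else 0 := by
  induction k with
  | zero =>
    intro i j
    simp only [pow_zero, Matrix.one_apply, Finset.range_zero, Finset.prod_empty, add_zero]
    congr 1
    simp [Fin.ext_iff, eq_comm]
  | succ k ih =>
    intro i j
    rw [pow_succ', Matrix.mul_apply]
    simp only [ih]
    have hE : ∀ l : Fin n, Emat n i l * (if (l : ℕ) = (j : ℕ) + k then
        (∏ m ∈ Finset.range k, ((n - 1 - ((j : ℕ) + m) : ℕ) : ℂ)) else 0)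
        = if (l : ℕ) = (j : ℕ) + k then (Emat n i l *
          ∏ m ∈ Finset.range k, ((n - 1 - ((j : ℕ) + m) : ℕ) : ℂ)) else 0 := by
      intro l; split_ifs <;> simp
    rw [Finset.sum_congr rfl fun l _ => hE l, fin_sum_collapse ((j : ℕ) + k)
      (fun l => Emat n i l * ∏ m ∈ Finset.range k, ((n - 1 - ((j : ℕ) + m) : ℕ) : ℂ))]
    split_ifs with h1 h2 h2
    · -- j + k < n, and i = j + (k+1)
      simp only [Emat]
      rw [if_pos (by omega), Finset.prod_range_succ]
      ring
    · simp only [Emat]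
      rw [if_neg (by omega), zero_mul]
    · exact absurd h2 (by omega)
    · rfl

lemma uvec_zero (n : ℕ) (hn : 0 < n) (j : Fin n) :
    uvec n ⟨0, hn⟩ j = Complex.I ^ (n - 1) / 2 ^ (n - 1)
      * ((-1 : ℂ) ^ (j : ℕ) * (((n - 1).choose (j : ℕ) : ℕ) : ℂ)) := by
  simp only [uvec, Nat.sub_zero]
  congr 1
  rw [Finset.sum_range_one]
  simp only [zero_add, Nat.choose_zero_right, Nat.cast_one, mul_one]
  rw [Finset.sum_ite_eq' (Finset.range n) ((j : ℕ))
    (fun s => (-1 : ℂ) ^ s * (((n - 1).choose s : ℕ) : ℂ))]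
  rw [if_pos (Finset.mem_range.mpr j.isLt)]

lemma choose_desc_identity (m j k : ℕ) (h : j + k ≤ m) :
    m.choose j * (m - j).descFactorial k = m.descFactorial k * (m - k).choose j := by
  apply Nat.eq_of_mul_eq_mul_right (Nat.mul_pos (Nat.factorial_pos j) (Nat.factorial_pos (m - j - k)))
  have h1 : (m - j - k).factorial * (m - j).descFactorial k = (m - j).factorial :=
    Nat.factorial_mul_descFactorial (by omega)
  have h2 : (m - k).factorial * m.descFactorial k = m.factorial :=
    Nat.factorial_mul_descFactorial (by omega)
  have h3 : m.choose j * j.factorial * (m - j).factorial = m.factorial :=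
    Nat.choose_mul_factorial_mul_factorial (by omega)
  have h4 : (m - k).choose j * j.factorial * (m - k - j).factorial = (m - k).factorial :=
    Nat.choose_mul_factorial_mul_factorial (by omega)
  have h5 : m - k - j = m - j - k := by omega
  calc m.choose j * (m - j).descFactorial k * (j.factorial * (m - j - k).factorial)
      = m.choose j * j.factorial * ((m - j - k).factorial * (m - j).descFactorial k) := by ring
    _ = m.choose j * j.factorial * (m - j).factorial := by rw [h1]
    _ = m.factorial := h3
    _ = (m - k).factorial * m.descFactorial k := h2.symm
    _ = (m - k).choose j * j.factorial * (m - k - j).factorial * m.descFactorial k := by rw [h4]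
    _ = m.descFactorial k * (m - k).choose j * (j.factorial * (m - j - k).factorial) := by
        rw [h5]; ring

/-- If `π₁` is the projection onto the line spanned by `u_1` along the span of the other
`u_q`'s, then `Tr(E⁰_k · π₁) = (-1)^k (n-1)! / (2^k (n-k-1)!)`. -/
theorem stmt_9 (n k : ℕ) (hn : 0 < n) (hk : k ≤ n - 1)
    (P : Matrix (Fin n) (Fin n) ℂ)
    (hP1 : P.mulVec (uvec n ⟨0, hn⟩) = uvec n ⟨0, hn⟩)
    (hP0 : ∀ q : Fin n, q ≠ ⟨0, hn⟩ → P.mulVec (uvec n q) = 0) :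
    Matrix.trace (E0 n k * P)
      = (-1 : ℂ) ^ k * ((n - 1).factorial : ℂ) / (2 ^ k * ((n - k - 1).factorial : ℂ)) := by
  set U := Umat n with hU
  set z : Fin n := ⟨0, hn⟩ with hz
  have hdet : IsUnit U.det := isUnit_iff_ne_zero.mpr (Umat_det_ne_zero n)
  have hUUi : U * U⁻¹ = 1 := Matrix.mul_nonsing_inv U hdet
  have hUiU : U⁻¹ * U = 1 := Matrix.nonsing_inv_mul U hdet
  -- Step 1: P * U = U * stdBasisMatrix z z 1
  have hPU : P * U = U * Matrix.single z z (1:ℂ) := by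
    ext j p
    have hL : (P * U) j p = (P.mulVec (uvec n p)) j := by
      simp [Matrix.mul_apply, Matrix.mulVec, dotProduct, Umat, hU]
    have hR : (U * Matrix.single z z (1:ℂ)) j p
        = if p = z then uvec n z j else 0 := by
      rw [Matrix.mul_apply]
      rw [Finset.sum_eq_single z]
      · simp only [Matrix.single, hU, Umat, Matrix.of_apply]
        split_ifs with h1 h2 h2
        · rw [mul_one]
        · exact absurd h1.2.symm h2
        · exact absurd h2.symm (by tauto)
        · rw [mul_zero]
      · intro b _ hb
        rw [Matrix.single, Matrix.of_apply,
          if_neg (fun hc : z = b ∧ z = p => hb hc.1.symm), mul_zero]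
      · simp
    rw [hL, hR]
    by_cases hp : p = z
    · rw [hp, hP1, if_pos rfl]
    · rw [hP0 p hp, if_neg hp]; rfl
  -- Step 2: P = U * std * U⁻¹, and trace computation
  have hP : P = U * Matrix.single z z (1:ℂ) * U⁻¹ := by
    calc P = P * (U * U⁻¹) := by rw [hUUi, Matrix.mul_one]
    _ = (P * U) * U⁻¹ := by rw [Matrix.mul_assoc]
    _ = U * Matrix.single z z (1:ℂ) * U⁻¹ := by rw [hPU]
  have htr : Matrix.trace (E0 n k * P) = (U⁻¹ * E0 n k * U) z z := by
    rw [hP]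
    have e1 : E0 n k * (U * Matrix.single z z (1:ℂ) * U⁻¹)
        = (E0 n k * U * Matrix.single z z (1:ℂ)) * U⁻¹ := by
      simp only [Matrix.mul_assoc]
    rw [e1, Matrix.trace_mul_comm]
    have e2 : U⁻¹ * (E0 n k * U * Matrix.single z z (1:ℂ))
        = (U⁻¹ * E0 n k * U) * Matrix.single z z (1:ℂ) := by
      simp only [Matrix.mul_assoc]
    rw [e2]
    unfold Matrix.trace
    rw [Finset.sum_eq_single z]
    · rw [Matrix.diag_apply, Matrix.mul_single_apply_same, mul_one]
    · intro b _ hb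
      rw [Matrix.diag_apply, Matrix.mul_single_apply_of_ne _ _ _ _ _ hb]
    · simp
  rw [htr]
  -- the first row of U⁻¹ is phiv n
  have hphi : Matrix.vecMul (phiv n) U = Pi.single z 1 := by
    funext p
    rw [Matrix.vecMul, dotProduct]
    rw [phi_col n p]
    rw [Pi.single_apply]
    congr 1
    simp [hz, Fin.ext_iff, eq_comm]
  have hrow : ∀ i, U⁻¹ z i = phiv n i := by
    have h1 : Matrix.vecMul (Matrix.vecMul (phiv n) U) U⁻¹ = phiv n := by
      rw [Matrix.vecMul_vecMul, hUUi, Matrix.vecMul_one]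
    rw [hphi] at h1
    intro i
    have h2 : Matrix.vecMul (Pi.single z (1:ℂ)) U⁻¹ i = U⁻¹ z i := by
      rw [Matrix.vecMul, dotProduct]
      rw [Finset.sum_eq_single z]
      · rw [Pi.single_eq_same, one_mul]
      · intro b _ hb
        rw [Pi.single_eq_of_ne hb, zero_mul]
      · simp
    rw [← h2, h1]
  -- expand the matrix entry
  have hentry : (U⁻¹ * E0 n k * U) z z
      = ∑ j : Fin n, (∑ i : Fin n, phiv n i * (E0 n k) i j) * U j z := by
    rw [Matrix.mul_apply]
    refine Finset.sum_congr rfl fun j _ => ?_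
    rw [Matrix.mul_apply]
    congr 1
    exact Finset.sum_congr rfl fun i _ => by rw [hrow i]
  rw [hentry]
  -- inner sum collapse
  have hinner : ∀ j : Fin n, (∑ i : Fin n, phiv n i * (E0 n k) i j)
      = if h : (j : ℕ) + k < n then
          (-Complex.I) ^ (n - 1) * (-1 : ℂ) ^ ((j : ℕ) + k)
            * ∏ m ∈ Finset.range k, ((n - 1 - ((j : ℕ) + m) : ℕ) : ℂ)
        else 0 := by
    intro j
    have : ∀ i : Fin n, phiv n i * (E0 n k) i j
        = if (i : ℕ) = (j : ℕ) + k then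
            (phiv n i * ∏ m ∈ Finset.range k, ((n - 1 - ((j : ℕ) + m) : ℕ) : ℂ)) else 0 := by
      intro i
      rw [E0, Emat_pow n k i j]
      split_ifs <;> simp
    rw [Finset.sum_congr rfl fun i _ => this i]
    rw [fin_sum_collapse ((j : ℕ) + k)
      (fun i => phiv n i * ∏ m ∈ Finset.range k, ((n - 1 - ((j : ℕ) + m) : ℕ) : ℂ))]
    split_ifs with h
    · rw [phiv]
    · rfl
  rw [Finset.sum_congr rfl fun j _ => by rw [hinner j, hU]]
  -- U j z = uvec n z j
  have hcol : ∀ j : Fin n, Umat n j z = Complex.I ^ (n - 1) / 2 ^ (n - 1)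
      * ((-1 : ℂ) ^ (j : ℕ) * (((n - 1).choose (j : ℕ) : ℕ) : ℂ)) := fun j => by
    rw [Umat, Matrix.of_apply, hz, uvec_zero n hn j]
  rw [Finset.sum_congr rfl fun j _ => by rw [hcol j]]
  -- now a pure sum over Fin n depending only on (j : ℕ)
  rw [Fin.sum_univ_eq_sum_range (fun j =>
    (if h : j + k < n then (-Complex.I) ^ (n - 1) * (-1 : ℂ) ^ (j + k)
        * ∏ m ∈ Finset.range k, ((n - 1 - (j + m) : ℕ) : ℂ) else 0)
      * (Complex.I ^ (n - 1) / 2 ^ (n - 1) * ((-1 : ℂ) ^ j * (((n - 1).choose j : ℕ) : ℂ))))]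
  have hterm : ∀ j ∈ Finset.range n,
      (if h : j + k < n then (-Complex.I) ^ (n - 1) * (-1 : ℂ) ^ (j + k)
          * ∏ m ∈ Finset.range k, ((n - 1 - (j + m) : ℕ) : ℂ) else 0)
        * (Complex.I ^ (n - 1) / 2 ^ (n - 1) * ((-1 : ℂ) ^ j * (((n - 1).choose j : ℕ) : ℂ)))
      = ((-1 : ℂ) ^ k * (((n - 1).descFactorial k : ℕ) : ℂ) / 2 ^ (n - 1))
          * (((n - 1 - k).choose j : ℕ) : ℂ) := by
    intro j hj
    rw [Finset.mem_range] at hj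
    by_cases h : j + k < n
    · rw [dif_pos h]
      have hprod : (∏ m ∈ Finset.range k, ((n - 1 - (j + m) : ℕ) : ℂ))
          = (((n - 1 - j).descFactorial k : ℕ) : ℂ) := by
        have : (n - 1 - j).descFactorial k = ∏ m ∈ Finset.range k, (n - 1 - (j + m)) := by
          rw [Nat.descFactorial_eq_prod_range]
          exact Finset.prod_congr rfl fun m _ => by omega
        rw [this, Nat.cast_prod]
      have hid := choose_desc_identity (n - 1) j k (by omega)
      have hidc : (((n - 1).choose j : ℕ) : ℂ) * (((n - 1 - j).descFactorial k : ℕ) : ℂ)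
          = (((n - 1).descFactorial k : ℕ) : ℂ) * (((n - 1 - k).choose j : ℕ) : ℂ) := by
        exact_mod_cast congrArg (Nat.cast : ℕ → ℂ) hid
      have hsign : (-Complex.I) ^ (n - 1) * Complex.I ^ (n - 1) = 1 := by
        rw [← mul_pow]; norm_num
      have hsign2 : ((-1 : ℂ)) ^ (j + k) * (-1 : ℂ) ^ j = (-1 : ℂ) ^ k := by
        rw [pow_add]
        have : ((-1 : ℂ)) ^ j * (-1 : ℂ) ^ j = 1 := by
          rw [← pow_add]; exact Even.neg_one_pow ⟨j, rfl⟩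
        calc (-1 : ℂ) ^ j * (-1 : ℂ) ^ k * (-1 : ℂ) ^ j
            = ((-1 : ℂ) ^ j * (-1 : ℂ) ^ j) * (-1 : ℂ) ^ k := by ring
          _ = (-1 : ℂ) ^ k := by rw [this, one_mul]
      rw [hprod]
      calc (-Complex.I) ^ (n - 1) * (-1 : ℂ) ^ (j + k) * (((n - 1 - j).descFactorial k : ℕ) : ℂ)
            * (Complex.I ^ (n - 1) / 2 ^ (n - 1) * ((-1 : ℂ) ^ j * (((n - 1).choose j : ℕ) : ℂ)))
          = ((-Complex.I) ^ (n - 1) * Complex.I ^ (n - 1)) * ((-1 : ℂ) ^ (j + k) * (-1 : ℂ) ^ j)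
            * ((((n - 1).choose j : ℕ) : ℂ) * (((n - 1 - j).descFactorial k : ℕ) : ℂ)) / 2 ^ (n - 1) := by
            ring
        _ = _ := by rw [hsign, hsign2, hidc]; ring
    · rw [dif_neg h, zero_mul]
      rw [Nat.choose_eq_zero_of_lt (by omega), Nat.cast_zero, mul_zero]
  rw [Finset.sum_congr rfl hterm, ← Finset.mul_sum]
  have hsum : ∑ j ∈ Finset.range n, (n - 1 - k).choose j = 2 ^ (n - 1 - k) := by
    have hss : ∑ j ∈ Finset.range (n - 1 - k + 1), (n - 1 - k).choose j
        = ∑ j ∈ Finset.range n, (n - 1 - k).choose j :=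
      Finset.sum_subset (Finset.range_subset_range.mpr (by omega))
        (fun x hx hnx => Nat.choose_eq_zero_of_lt
          (by simp only [Finset.mem_range] at hx hnx; omega))
    rw [← hss, Nat.sum_range_choose]
  have hsumc : ∑ j ∈ Finset.range n, (((n - 1 - k).choose j : ℕ) : ℂ) = ((2 ^ (n - 1 - k) : ℕ) : ℂ) := by
    rw [← Nat.cast_sum, hsum]
  rw [hsumc]
  -- final arithmetic
  have hfac : (n - 1 - k).factorial * (n - 1).descFactorial k = (n - 1).factorial :=
    Nat.factorial_mul_descFactorial (by omega)
  have hfacc : (((n - 1).factorial : ℕ) : ℂ)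
      = (((n - 1 - k).factorial : ℕ) : ℂ) * (((n - 1).descFactorial k : ℕ) : ℂ) := by
    exact_mod_cast congrArg (Nat.cast : ℕ → ℂ) hfac.symm
  rw [show n - k - 1 = n - 1 - k from by omega, hfacc]
  push_cast
  set D : ℂ := (((n - 1).descFactorial k : ℕ) : ℂ) with hD
  set a := n - 1 - k with ha
  rw [show n - 1 = a + k from by omega, pow_add]
  have h2a : (2 : ℂ) ^ a ≠ 0 := pow_ne_zero _ two_ne_zero
  have h2k : (2 : ℂ) ^ k ≠ 0 := pow_ne_zero _ two_ne_zero
  have hfa : ((a.factorial : ℕ) : ℂ) ≠ 0 := Nat.cast_ne_zero.mpr a.factorial_ne_zero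
  field_simp
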